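/- arXiv:1005.5723 — 4 statements merged into one kernel-verified Lean document; each statement's English description precedes it below -/
import Mathlib

section
/- If g = [[a,b],[c,d]] satisfies g†Γg = Γ (with Γ = diag(E,-E)) and Z is a 2×2 complex matrix with Z†Z < E (i.e. E - Z†Z positive definite), then cZ + d is invertible. -/
open Matrix
open scoped ComplexOrder

abbrev M2 : Type := Matrix (Fin 2) (Fin 2) ℂ
abbrev M4 : Type := Matrix (Fin 2 ⊕ Fin 2) (Fin 2 ⊕ Fin 2) ℂ

noncomputable def Γ : M4 := fromBlocks 1 0 0 (-1)

/-- For g ∈ SU(2,2) and Z in the Bergman domain, cZ + d is invertible. -/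
theorem stmt2 (a b c d Z : M2)
    (hg : (fromBlocks a b c d)ᴴ * Γ * (fromBlocks a b c d) = Γ)
    (hZ : (1 - Zᴴ * Z).PosDef) :
    IsUnit (c * Z + d) := by
  rw [Γ, fromBlocks_conjTranspose, fromBlocks_multiply, fromBlocks_multiply] at hg
  simp only [mul_one, mul_zero, mul_neg, zero_add, add_zero, mul_zero, zero_mul] at hg
  rw [fromBlocks_inj] at hg
  obtain ⟨h11, h12, h21, h22⟩ := hg
  -- key identity: (cZ+d)ᴴ(cZ+d) = (1 - ZᴴZ) + (aZ+b)ᴴ(aZ+b)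
  have key : (c * Z + d)ᴴ * (c * Z + d) = (1 - Zᴴ * Z) + (a * Z + b)ᴴ * (a * Z + b) := by
    have e11 : aᴴ * a = 1 + cᴴ * c := by
      have := h11; linear_combination (norm := noncomm_ring) this
    have e12 : aᴴ * b = cᴴ * d := by
      have := h12; linear_combination (norm := noncomm_ring) this
    have e21 : bᴴ * a = dᴴ * c := by
      have := h21; linear_combination (norm := noncomm_ring) this
    have e22 : dᴴ * d = 1 + bᴴ * b := by
      have := h22; linear_combination (norm := noncomm_ring) -this
    simp only [conjTranspose_add, conjTranspose_mul]
    linear_combination (norm := noncomm_ring) -(Zᴴ * e11 * Z) - Zᴴ * e12 - e21 * Z + e22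
  have hpd : ((c * Z + d)ᴴ * (c * Z + d)).PosDef := by
    rw [key]
    exact hZ.add_posSemidef (posSemidef_conjTranspose_mul_self _)
  have := hpd.isUnit
  rw [isUnit_iff_isUnit_det] at this ⊢
  rw [det_mul, det_conjTranspose] at this
  exact isUnit_of_mul_isUnit_right this
end

section
/- The Möbius-type action Z' = (aZ+b)(cZ+d)^{-1} of a matrix g = [[a,b],[c,d]] satisfying g†Γg = Γ maps the Bergman domain D = {Z ∈ M₂(ℂ) : Z†Z < E} into itself; that is, if E - Z†Z is positive definite then E - Z'†Z' is positive definite. -/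
open Matrix
open scoped ComplexOrder

private lemma posdef_congr {n : Type*} [Fintype n] [DecidableEq n]
    {A B : Matrix n n ℂ} (hA : A.PosDef) (hB : IsUnit B) :
    (Bᴴ * A * B).PosDef := by
  refine Matrix.PosDef.of_dotProduct_mulVec_pos (Matrix.isHermitian_conjTranspose_mul_mul B hA.1) fun x hx => ?_
  have hBx : B *ᵥ x ≠ 0 := by
    have := Matrix.mulVec_injective_iff_isUnit.2 hB
    intro h
    exact hx (this (by simpa using h))
  simpa only [star_mulVec, dotProduct_mulVec, vecMul_vecMul] using hA.dotProduct_mulVec_pos hBx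

/-- The Möbius action maps the Bergman domain into itself. -/
theorem stmt3 (a b c d Z : M2)
    (hg : (fromBlocks a b c d)ᴴ * Γ * (fromBlocks a b c d) = Γ)
    (hZ : (1 - Zᴴ * Z).PosDef) :
    (1 - ((a * Z + b) * (c * Z + d)⁻¹)ᴴ * ((a * Z + b) * (c * Z + d)⁻¹)).PosDef := by
  -- extract block equations
  rw [Γ, fromBlocks_conjTranspose, fromBlocks_multiply, fromBlocks_multiply] at hg
  have h11 : aᴴ * a - cᴴ * c = 1 := by
    have := congrArg Matrix.toBlocks₁₁ hg
    simpa [Matrix.mul_neg, sub_eq_add_neg] using this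
  have h12 : aᴴ * b - cᴴ * d = 0 := by
    have := congrArg Matrix.toBlocks₁₂ hg
    simpa [Matrix.mul_neg, sub_eq_add_neg] using this
  have h21 : bᴴ * a - dᴴ * c = 0 := by
    have := congrArg Matrix.toBlocks₂₁ hg
    simpa [Matrix.mul_neg, sub_eq_add_neg] using this
  have h22 : bᴴ * b - dᴴ * d = -1 := by
    have := congrArg Matrix.toBlocks₂₂ hg
    simpa [Matrix.mul_neg, sub_eq_add_neg] using this
  set M : M2 := c * Z + d with hM
  set N : M2 := a * Z + b with hN
  have key : Mᴴ * M - Nᴴ * N = 1 - Zᴴ * Z := by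
    have e1 : aᴴ * a = 1 + cᴴ * c := by linear_combination (norm := noncomm_ring) h11
    have e4 : bᴴ * b = dᴴ * d - 1 := by linear_combination (norm := noncomm_ring) h22
    simp only [hM, hN, conjTranspose_add, conjTranspose_mul]
    calc (Zᴴ * cᴴ + dᴴ) * (c * Z + d) - (Zᴴ * aᴴ + bᴴ) * (a * Z + b)
        = -(Zᴴ * (aᴴ * a) * Z) + Zᴴ * (cᴴ * c) * Z - Zᴴ * (aᴴ * b - cᴴ * d)
          - (bᴴ * a - dᴴ * c) * Z - bᴴ * b + dᴴ * d := by noncomm_ring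
      _ = 1 - Zᴴ * Z := by rw [e1, e4, h12, h21]; noncomm_ring
  -- invertibility of M
  have hker : ∀ v : Fin 2 → ℂ, M *ᵥ v = 0 → v = 0 := by
    intro v hv
    by_contra hv0
    have hpos := hZ.dotProduct_mulVec_pos hv0
    rw [← key] at hpos
    have hexp : star v ⬝ᵥ (Mᴴ * M - Nᴴ * N) *ᵥ v
        = star (M *ᵥ v) ⬝ᵥ (M *ᵥ v) - star (N *ᵥ v) ⬝ᵥ (N *ᵥ v) := by
      simp only [sub_mulVec, ← Matrix.mulVec_mulVec, dotProduct_mulVec, ← star_mulVec,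
        dotProduct_sub]
    rw [hexp, hv] at hpos
    simp only [star_zero, zero_dotProduct, zero_sub] at hpos
    have := dotProduct_star_self_nonneg (N *ᵥ v)
    exact lt_irrefl (0:ℂ) (lt_of_le_of_lt this (neg_pos.mp hpos))
  have hMunit : IsUnit M := by
    rw [← Matrix.mulVec_injective_iff_isUnit]
    intro x y hxy
    have : M *ᵥ (x - y) = 0 := by rw [mulVec_sub, hxy, sub_self]
    exact sub_eq_zero.mp (hker _ this)
  have hMdet : IsUnit M.det := (Matrix.isUnit_iff_isUnit_det M).mp hMunit
  have hMinv : IsUnit (M⁻¹) := Matrix.isUnit_nonsing_inv_iff.mpr hMunit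
  have hrw : 1 - (N * M⁻¹)ᴴ * (N * M⁻¹) = (M⁻¹)ᴴ * (1 - Zᴴ * Z) * M⁻¹ := by
    rw [← key]
    have h1 : M * M⁻¹ = 1 := Matrix.mul_nonsing_inv M hMdet
    have h2 : (M⁻¹)ᴴ * Mᴴ = 1 := by
      rw [← conjTranspose_mul, h1, conjTranspose_one]
    calc 1 - (N * M⁻¹)ᴴ * (N * M⁻¹)
        = (M⁻¹)ᴴ * Mᴴ * (M * M⁻¹) - (M⁻¹)ᴴ * (Nᴴ * N) * M⁻¹ := by
          rw [h1, h2]; simp [conjTranspose_mul, Matrix.mul_assoc]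
      _ = (M⁻¹)ᴴ * (Mᴴ * M - Nᴴ * N) * M⁻¹ := by noncomm_ring
  rw [hrw]
  exact posdef_congr hZ hMinv
end

section
/- The action of SU(2,2) on the Bergman domain D = {Z ∈ M₂(ℂ) : Z†Z < E} is transitive: for every Z ∈ D there exists g ∈ SU(2,2) with g·0 = Z, where g·W = (aW+b)(cW+d)^{-1}. -/
open Matrix
open scoped ComplexOrder

noncomputable def act (g : M4) (Z : M2) : M2 :=
  (g.toBlocks₁₁ * Z + g.toBlocks₁₂) * (g.toBlocks₂₁ * Z + g.toBlocks₂₂)⁻¹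

/-- SU(2,2) acts transitively on the Bergman domain: every Z ∈ D is g·0 for some g. -/
theorem stmt5 (Z : M2) (hZ : (1 - Zᴴ * Z).PosDef) :
    ∃ g : M4, gᴴ * Γ * g = Γ ∧ g.det = 1 ∧ act g 0 = Z := by
  set N : M2 := 1 - Zᴴ * Z with hNdef
  have hNdet : IsUnit N.det := hZ.det_pos.ne'.isUnit
  have hNi : (N⁻¹).PosDef := hZ.inv
  set W : M2 := N⁻¹ with hWdef
  have hNW : N * W = 1 := mul_nonsing_inv _ hNdet
  have hWN : W * N = 1 := nonsing_inv_mul _ hNdet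
  set P : M2 := 1 + Z * W * Zᴴ with hPdef
  have hP : P.PosDef :=
    Matrix.PosDef.add_posSemidef Matrix.PosDef.one
      (hNi.posSemidef.mul_mul_conjTranspose_same Z)
  set M : M2 := 1 - Z * Zᴴ with hMdef
  have hMP : M * P = 1 := by
    have h1 : W - Zᴴ * Z * W = 1 := by
      calc W - Zᴴ * Z * W = (1 - Zᴴ * Z) * W := by noncomm_ring
        _ = 1 := hNW
    calc M * P = 1 - Z * Zᴴ + Z * (W - Zᴴ * Z * W) * Zᴴ := by rw [hMdef, hPdef]; noncomm_ring
      _ = 1 := by rw [h1]; noncomm_ring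
  -- square roots
  set a : M2 := open scoped MatrixOrder in CFC.sqrt P with hadef
  set d : M2 := open scoped MatrixOrder in CFC.sqrt W with hddef
  have ha2 : a * a = P := open scoped MatrixOrder in CFC.sqrt_mul_sqrt_self P hP.posSemidef.nonneg
  have hd2 : d * d = W := open scoped MatrixOrder in CFC.sqrt_mul_sqrt_self W hNi.posSemidef.nonneg
  have haH : aᴴ = a := open scoped MatrixOrder in (CFC.sqrt_nonneg P).posSemidef.isHermitian
  have hdH : dᴴ = d := open scoped MatrixOrder in (CFC.sqrt_nonneg W).posSemidef.isHermitian
  have hadet : IsUnit a.det := by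
    have h : a.det * a.det ≠ 0 := by rw [← det_mul, ha2]; exact hP.det_pos.ne'
    have h' : a.det ≠ 0 := fun h' => h (by rw [h', mul_zero])
    exact h'.isUnit
  have hddet : IsUnit d.det := by
    have h : d.det * d.det ≠ 0 := by rw [← det_mul, hd2]; exact hNi.det_pos.ne'
    have h' : d.det ≠ 0 := fun h' => h (by rw [h', mul_zero])
    exact h'.isUnit
  -- key identities
  have haMa : a * M * a = 1 := by
    have hM' : M = (a * a)⁻¹ := by rw [ha2, ← inv_eq_left_inv hMP]
    rw [hM', Matrix.mul_inv_rev, ← Matrix.mul_assoc, Matrix.mul_assoc (a * a⁻¹),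
      mul_nonsing_inv _ hadet, nonsing_inv_mul _ hadet, Matrix.one_mul]
  have hdNd : d * N * d = 1 := by
    have hN' : N = (d * d)⁻¹ := by
      rw [hd2, hWdef, nonsing_inv_nonsing_inv _ hNdet]
    rw [hN', Matrix.mul_inv_rev, ← Matrix.mul_assoc, Matrix.mul_assoc (d * d⁻¹),
      mul_nonsing_inv _ hddet, nonsing_inv_mul _ hddet, Matrix.one_mul]
  have h11 : a * a - a * Z * Zᴴ * a = 1 := by
    calc a * a - a * Z * Zᴴ * a = a * M * a := by rw [hMdef]; noncomm_ring
      _ = 1 := haMa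
  have h22 : d * Zᴴ * Z * d - d * d = -1 := by
    have : d * N * d = 1 := hdNd
    calc d * Zᴴ * Z * d - d * d = -(d * N * d) := by rw [hNdef]; noncomm_ring
      _ = -1 := by rw [hdNd]
  -- the basic group element
  set g₀ : M4 := fromBlocks a (Z * d) (Zᴴ * a) d with hg0def
  have hg0H : g₀ᴴ = fromBlocks a (a * Z) (d * Zᴴ) d := by
    rw [hg0def, fromBlocks_conjTranspose, haH, hdH, conjTranspose_mul, haH,
      conjTranspose_mul, hdH, conjTranspose_conjTranspose]
  have hΓ0 : g₀ᴴ * Γ * g₀ = Γ := by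
    rw [hg0H, hg0def, Γ, fromBlocks_multiply, fromBlocks_multiply]
    rw [fromBlocks_inj]
    refine ⟨?_, ?_, ?_, ?_⟩
    · conv_rhs => rw [← h11]
      noncomm_ring
    · noncomm_ring
    · noncomm_ring
    · conv_rhs => rw [← h22]
      noncomm_ring
  -- determinant of g₀ has modulus 1
  have hΓdet : Γ.det = 1 := by
    simp [Γ, Matrix.det_fromBlocks_zero₂₁, Matrix.det_neg]
  have hdet0 : star g₀.det * g₀.det = 1 := by
    have h := congrArg Matrix.det hΓ0
    rwa [det_mul, det_mul, det_conjTranspose, hΓdet, mul_one] at h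
  have hg0ne : g₀.det ≠ 0 := by
    intro h
    rw [h, mul_zero] at hdet0
    exact zero_ne_one hdet0
  have hstar : star g₀.det = (g₀.det)⁻¹ := eq_inv_of_mul_eq_one_left hdet0
  -- phase correction
  set δ : ℂ := (g₀.det)⁻¹ ^ ((2 : ℕ) : ℂ)⁻¹ with hδdef
  have hδ2 : δ ^ (2 : ℕ) = (g₀.det)⁻¹ := Complex.cpow_nat_inv_pow _ two_ne_zero
  have hδstar : star δ * δ = 1 := by
    have hsq : (star δ * δ) ^ 2 = 1 := by
      rw [mul_pow, ← star_pow, hδ2, star_inv₀, hstar, inv_inv, mul_inv_cancel₀ hg0ne]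
    have hns : star δ * δ = ((Complex.normSq δ : ℂ)) := by
      rw [Complex.star_def, mul_comm, Complex.mul_conj]
    rw [hns] at hsq ⊢
    have hr : (Complex.normSq δ) ^ 2 = 1 := by exact_mod_cast hsq
    have : Complex.normSq δ = 1 := by nlinarith [Complex.normSq_nonneg δ]
    rw [this]; norm_num
  have hδne : δ ≠ 0 := by
    intro h
    rw [h, mul_zero] at hδstar
    exact zero_ne_one hδstar
  set k : M4 := fromBlocks (δ • (1 : M2)) 0 0 1 with hkdef
  refine ⟨g₀ * k, ?_, ?_, ?_⟩
  · have hkH : kᴴ = fromBlocks (star δ • (1 : M2)) 0 0 1 := by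
      simp [hkdef, fromBlocks_conjTranspose]
    have hc : (g₀ * k)ᴴ * Γ * (g₀ * k) = kᴴ * (g₀ᴴ * Γ * g₀) * k := by
      rw [conjTranspose_mul]; noncomm_ring
    rw [hc, hΓ0, hkH, hkdef, Γ, fromBlocks_multiply, fromBlocks_multiply]
    rw [fromBlocks_inj]
    refine ⟨?_, by simp, by simp, by simp⟩
    simp only [Matrix.mul_zero, Matrix.zero_mul, add_zero, zero_add, smul_zero, smul_smul,
      Matrix.mul_one]
    rw [Matrix.smul_mul, Matrix.one_mul, smul_smul, hδstar, one_smul]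
  · rw [det_mul, hkdef, Matrix.det_fromBlocks_zero₂₁, det_smul]
    simp only [det_one, Fintype.card_fin, mul_one]
    rw [hδ2, mul_inv_cancel₀ hg0ne]
  · have hg : g₀ * k = fromBlocks (a * (δ • (1 : M2))) (Z * d) ((Zᴴ * a) * (δ • (1 : M2))) d := by
      rw [hg0def, hkdef, fromBlocks_multiply]
      simp
    rw [hg, act]
    simp only [toBlocks_fromBlocks₁₁, toBlocks_fromBlocks₁₂, toBlocks_fromBlocks₂₁,
      toBlocks_fromBlocks₂₂, Matrix.mul_zero, zero_add]
    rw [Matrix.mul_assoc, mul_nonsing_inv _ hddet, Matrix.mul_one]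
end

section
/- Let b†_{αβ} (α,β = 1,2) be four commuting creation operators and b_{αβ} the corresponding annihilation operators with [b_{αβ}, b†_{γδ}] = δ_{αγ}δ_{βδ}. For a real diagonal 2×2 matrix Λ, one has the identity exp(-tr(b†Λb)) · det(b†)^N = exp(-N tr Λ) · det(b†)^N · exp(-tr(b†Λb)) as operators, where det(b†) = b†₁₁b†₂₂ - b†₁₂b†₂₁. -/
lemma pow_comm_aux {A : Type*} [Ring A] [Algebra ℂ A] (x d : A) (s : ℂ)
    (h : x * d - d * x = s • d) (N : ℕ) :
    x * d ^ N - d ^ N * x = ((N : ℂ) * s) • d ^ N := by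
  induction N with
  | zero => simp
  | succ n ih =>
    have key : x * d ^ (n+1) - d ^ (n+1) * x
        = (x * d - d * x) * d ^ n + d * (x * d ^ n - d ^ n * x) := by
      rw [pow_succ']; noncomm_ring
    rw [key, h, ih, smul_mul_assoc, mul_smul_comm, ← pow_succ', ← add_smul]
    congr 1
    push_cast
    ring

lemma single_comm {A : Type*} [Ring A] [Algebra ℂ A]
    (b bd : Fin 2 → Fin 2 → A)
    (hccr : ∀ α β γ δ : Fin 2,
      b α β * bd γ δ - bd γ δ * b α β =
        algebraMap ℂ A ((if α = γ then 1 else 0) * (if β = δ then 1 else 0)))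
    (hbdbd : ∀ α β γ δ : Fin 2, bd α β * bd γ δ = bd γ δ * bd α β)
    (Λ : Fin 2 → ℝ) :
    (∑ α : Fin 2, ∑ β : Fin 2, ((Λ β : ℂ)) • (bd α β * b α β)) *
        (bd 0 0 * bd 1 1 - bd 0 1 * bd 1 0)
      - (bd 0 0 * bd 1 1 - bd 0 1 * bd 1 0) *
        (∑ α : Fin 2, ∑ β : Fin 2, ((Λ β : ℂ)) • (bd α β * b α β))
      = ((Λ 0 : ℂ) + (Λ 1 : ℂ)) • (bd 0 0 * bd 1 1 - bd 0 1 * bd 1 0) := by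
  have hswap : ∀ α β γ δ : Fin 2, b α β * bd γ δ = bd γ δ * b α β +
      algebraMap ℂ A ((if α = γ then 1 else 0) * (if β = δ then 1 else 0)) := by
    intro α β γ δ
    have h := hccr α β γ δ
    rw [sub_eq_iff_eq_add] at h
    rw [h, add_comm]
  set D : A := bd 0 0 * bd 1 1 - bd 0 1 * bd 1 0 with hD
  -- commutator of b α β with D
  have hbD : ∀ α β : Fin 2, b α β * D = D * b α β
      + (algebraMap ℂ A ((if α = (0:Fin 2) then 1 else 0) * (if β = (0:Fin 2) then 1 else 0)) * bd 1 1
       + bd 0 0 * algebraMap ℂ A ((if α = (1:Fin 2) then 1 else 0) * (if β = (1:Fin 2) then 1 else 0))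
       - algebraMap ℂ A ((if α = (0:Fin 2) then 1 else 0) * (if β = (1:Fin 2) then 1 else 0)) * bd 1 0
       - bd 0 1 * algebraMap ℂ A ((if α = (1:Fin 2) then 1 else 0) * (if β = (0:Fin 2) then 1 else 0))) := by
    intro α β
    have h1 := hswap α β 0 0
    have h2 := hswap α β 1 1
    have h3 := hswap α β 0 1
    have h4 := hswap α β 1 0
    rw [hD]
    calc b α β * (bd 0 0 * bd 1 1 - bd 0 1 * bd 1 0)
        = (b α β * bd 0 0) * bd 1 1 - (b α β * bd 0 1) * bd 1 0 := by noncomm_ring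
      _ = bd 0 0 * (b α β * bd 1 1)
            + algebraMap ℂ A ((if α = (0:Fin 2) then 1 else 0) * (if β = (0:Fin 2) then 1 else 0)) * bd 1 1
          - (bd 0 1 * (b α β * bd 1 0)
            + algebraMap ℂ A ((if α = (0:Fin 2) then 1 else 0) * (if β = (1:Fin 2) then 1 else 0)) * bd 1 0) := by
          rw [h1, h3]; noncomm_ring
      _ = _ := by rw [h2, h4]; noncomm_ring
  -- bd commutes with D
  have hbdD : ∀ α β : Fin 2, bd α β * D = D * bd α β := by
    intro α β
    rw [hD, mul_sub, sub_mul, ← mul_assoc, ← mul_assoc, hbdbd α β 0 0, hbdbd α β 0 1,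
      mul_assoc, mul_assoc, hbdbd α β 1 1, hbdbd α β 1 0, ← mul_assoc, ← mul_assoc]
  simp only [Fin.sum_univ_two]
  have e00 := hbD 0 0
  have e01 := hbD 0 1
  have e10 := hbD 1 0
  have e11 := hbD 1 1
  simp only [Fin.zero_eq_one_iff, Fin.one_eq_zero_iff, if_true, if_false, ite_self,
    Nat.succ_ne_self, show ((0:Fin 2) = 0) = True by simp, show ((1:Fin 2) = 1) = True by simp,
    show ((0:Fin 2) = 1) = False by simp, show ((1:Fin 2) = 0) = False by simp,
    one_mul, mul_one, mul_zero, zero_mul, map_one, map_zero, add_zero, zero_add, sub_zero,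
    zero_sub] at e00 e01 e10 e11
  -- now e00 : b 0 0 * D = D * b 0 0 + bd 1 1, etc.
  simp only [add_mul, smul_mul_assoc]
  simp only [mul_assoc, mul_add, mul_smul_comm]
  simp only [e00, e01, e10, e11]
  simp only [mul_add, mul_neg]
  simp only [← mul_assoc]
  rw [hbdD 0 0, hbdD 0 1, hbdD 1 0, hbdD 1 1]
  rw [hbdbd 1 0 0 1, hbdbd 1 1 0 0]
  rw [hD]
  simp only [smul_add, smul_neg, smul_sub, add_smul, mul_assoc]
  abel

/-- The commutator identity [tr(b†Λb), det(b†)^N] = N tr(Λ) det(b†)^N in the Weyl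
algebra generated by four oscillator pairs (the algebraic form of the identity
exp(-tr(b†Λb)) det(b†)^N = exp(-N trΛ) det(b†)^N exp(-tr(b†Λb))). -/
theorem stmt15 {A : Type*} [Ring A] [Algebra ℂ A]
    (b bd : Fin 2 → Fin 2 → A)
    (hccr : ∀ α β γ δ : Fin 2,
      b α β * bd γ δ - bd γ δ * b α β =
        algebraMap ℂ A ((if α = γ then 1 else 0) * (if β = δ then 1 else 0)))
    (hbb : ∀ α β γ δ : Fin 2, b α β * b γ δ = b γ δ * b α β)
    (hbdbd : ∀ α β γ δ : Fin 2, bd α β * bd γ δ = bd γ δ * bd α β)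
    (Λ : Fin 2 → ℝ) (N : ℕ) :
    let trΛ : A := ∑ α : Fin 2, ∑ β : Fin 2, ((Λ β : ℂ)) • (bd α β * b α β)
    let detbd : A := bd 0 0 * bd 1 1 - bd 0 1 * bd 1 0
    trΛ * detbd ^ N - detbd ^ N * trΛ =
      ((N : ℂ) * ((Λ 0 : ℂ) + (Λ 1 : ℂ))) • detbd ^ N := by
  intro trΛ detbd
  exact pow_comm_aux trΛ detbd _ (single_comm b bd hccr hbdbd Λ) N
end
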